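/- If A is a dense subring of B, then the map i* : Spec B → Spec A, P ↦ P ∩ A, is an open map onto its image: for every f ∈ B, the image i*(X_f^B) of the basic open set X_f^B is open in the subspace i*(Spec B) of Spec A. -/
import Mathlib


def IsDenseSubring {B : Type*} [CommRing B] (A : Subring B) : Prop :=
  ∀ I : Ideal B, ∀ b ∉ I.radical, ∃ a ∉ I.radical, a * b ∈ A

theorem stmt_12 {B : Type*} [CommRing B] (A : Subring B) (hA : IsDenseSubring A) :
    ∀ f : B, ∃ U : Set (PrimeSpectrum A), IsOpen U ∧
      PrimeSpectrum.comap A.subtype '' (PrimeSpectrum.basicOpen f : Set (PrimeSpectrum B)) =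
        U ∩ Set.range (PrimeSpectrum.comap A.subtype) := by
  intro f
  refine ⟨⋃ g ∈ {g : A | ∃ a : B, a * f = (g : B)},
    (PrimeSpectrum.basicOpen g : Set (PrimeSpectrum A)), ?_, ?_⟩
  · exact isOpen_biUnion fun g _ => (PrimeSpectrum.basicOpen g).isOpen
  · ext Q
    constructor
    · rintro ⟨P, hP, rfl⟩
      replace hP : f ∉ P.asIdeal := hP
      have hfr : f ∉ P.asIdeal.radical := by
        rw [P.isPrime.radical]; exact hP
      obtain ⟨a, haP, haf⟩ := hA P.asIdeal f hfr
      rw [P.isPrime.radical] at haP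
      constructor
      · refine Set.mem_iUnion₂.mpr ⟨(⟨a * f, haf⟩ : A), ⟨a, rfl⟩, ?_⟩
        show (⟨a * f, haf⟩ : A) ∉ (PrimeSpectrum.comap A.subtype P).asIdeal
        intro h
        have h2 : a * f ∈ P.asIdeal := h
        exact (P.isPrime.mem_or_mem h2).elim haP hP
      · exact ⟨P, rfl⟩
    · rintro ⟨hU, P, rfl⟩
      obtain ⟨g, ⟨a, hg⟩, hgQ⟩ := Set.mem_iUnion₂.mp hU
      simp only [SetLike.mem_coe, PrimeSpectrum.mem_basicOpen] at hgQ
      have haf : a * f ∉ P.asIdeal := by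
        intro h
        exact hgQ (show g ∈ (PrimeSpectrum.comap A.subtype P).asIdeal from by
          simpa [PrimeSpectrum.comap_asIdeal, Ideal.mem_comap, hg] using h)
      refine ⟨P, ?_, rfl⟩
      show f ∉ P.asIdeal
      intro hf
      exact haf (Ideal.mul_mem_left _ a hf)
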